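/- The quotient ring ℤ[t]/(t^(2k+1), t^(k+1), 2t - t²) is isomorphic to ℤ[t]/(2^k·t, 2t - t²), and its additive group is isomorphic to ℤ ⊕ ℤ/2^k, with the free summand generated by 1 and the torsion summand generated by t. -/

import Mathlib

open Polynomial

private lemma dvd_key (j : ℕ) : (2 * X - X ^ 2 : ℤ[X]) ∣ X ^ (j + 1) - 2 ^ j * X := by
  obtain ⟨c, hc⟩ := sub_dvd_pow_sub_pow (X : ℤ[X]) 2 j
  exact ⟨-c, by linear_combination (X : ℤ[X]) * hc⟩

private lemma ideal_eq (k : ℕ) :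
    Ideal.span ({X ^ (2 * k + 1), X ^ (k + 1), 2 * X - X ^ 2} : Set (Polynomial ℤ)) =
    Ideal.span ({(2 : Polynomial ℤ) ^ k * X, 2 * X - X ^ 2} : Set (Polynomial ℤ)) := by
  apply le_antisymm
  · rw [Ideal.span_le]
    intro p hp
    simp only [Set.mem_insert_iff, Set.mem_singleton_iff] at hp
    rw [SetLike.mem_coe]
    have hX : (2 : Polynomial ℤ) ^ k * X ∈ Ideal.span
        ({(2 : Polynomial ℤ) ^ k * X, 2 * X - X ^ 2} : Set (Polynomial ℤ)) :=
      Ideal.subset_span (by simp)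
    have hS : (2 * X - X ^ 2 : ℤ[X]) ∈ Ideal.span
        ({(2 : Polynomial ℤ) ^ k * X, 2 * X - X ^ 2} : Set (Polynomial ℤ)) :=
      Ideal.subset_span (by simp)
    rcases hp with h | h | h
    · subst h
      obtain ⟨c, hc⟩ := dvd_key (2 * k)
      have he : (X : ℤ[X]) ^ (2 * k + 1) = 2 ^ k * (2 ^ k * X) + c * (2 * X - X ^ 2) := by
        linear_combination hc
      rw [he]
      exact add_mem (Ideal.mul_mem_left _ _ hX) (Ideal.mul_mem_left _ _ hS)
    · subst h
      obtain ⟨c, hc⟩ := dvd_key k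
      have he : (X : ℤ[X]) ^ (k + 1) = 1 * (2 ^ k * X) + c * (2 * X - X ^ 2) := by
        linear_combination hc
      rw [he]
      exact add_mem (Ideal.mul_mem_left _ _ hX) (Ideal.mul_mem_left _ _ hS)
    · subst h; exact hS
  · rw [Ideal.span_le]
    intro p hp
    simp only [Set.mem_insert_iff, Set.mem_singleton_iff] at hp
    rw [SetLike.mem_coe]
    have hX : (X : ℤ[X]) ^ (k + 1) ∈ Ideal.span
        ({X ^ (2 * k + 1), X ^ (k + 1), 2 * X - X ^ 2} : Set (Polynomial ℤ)) :=
      Ideal.subset_span (by simp)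
    have hS : (2 * X - X ^ 2 : ℤ[X]) ∈ Ideal.span
        ({X ^ (2 * k + 1), X ^ (k + 1), 2 * X - X ^ 2} : Set (Polynomial ℤ)) :=
      Ideal.subset_span (by simp)
    rcases hp with h | h
    · subst h
      obtain ⟨c, hc⟩ := dvd_key k
      have he : (2 : ℤ[X]) ^ k * X = 1 * X ^ (k + 1) + (-c) * (2 * X - X ^ 2) := by
        linear_combination -hc
      rw [he]
      exact add_mem (Ideal.mul_mem_left _ _ hX) (Ideal.mul_mem_left _ _ hS)
    · subst h; exact hS

theorem stmt_16 (k : ℕ) (hk : 1 ≤ k) :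
    let A := Polynomial ℤ ⧸ Ideal.span
      ({X ^ (2 * k + 1), X ^ (k + 1), 2 * X - X ^ 2} : Set (Polynomial ℤ))
    let B := Polynomial ℤ ⧸ Ideal.span
      ({(2 : Polynomial ℤ) ^ k * X, 2 * X - X ^ 2} : Set (Polynomial ℤ))
    (∃ e : A ≃+* B, e (Ideal.Quotient.mk _ X) = Ideal.Quotient.mk _ X) ∧
      ∃ g : A ≃+ ℤ × ZMod (2 ^ k),
        g 1 = (1, 0) ∧ g (Ideal.Quotient.mk _ X) = (0, 1) := by
  intro A B
  set I := Ideal.span ({X ^ (2 * k + 1), X ^ (k + 1), 2 * X - X ^ 2} : Set (Polynomial ℤ)) with hI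
  set J := Ideal.span ({(2 : Polynomial ℤ) ^ k * X, 2 * X - X ^ 2} : Set (Polynomial ℤ)) with hJ
  have hIJ : I = J := ideal_eq k
  have h2z : (2 : ZMod (2 ^ k)) ^ k = 0 := by
    have := ZMod.natCast_self (2 ^ k)
    push_cast at this
    exact this
  have hmk : ∀ a m : ℤ, Ideal.Quotient.mk I (C a + C m * X)
      = (a : A) + (m : A) * Ideal.Quotient.mk I X := by
    intro a m
    rw [map_add, map_mul]
    simp [Ideal.Quotient.mk_algebraMap]
  constructor
  · exact ⟨Ideal.quotEquivOfEq hIJ, Ideal.quotEquivOfEq_mk hIJ X⟩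
  · have ht0 : ((LinearMap.toSpanSingleton ℤ A (Ideal.Quotient.mk I X)).toAddMonoidHom)
        ((2 ^ k : ℕ) : ℤ) = 0 := by
      show ((2 ^ k : ℕ) : ℤ) • (Ideal.Quotient.mk I X) = 0
      rw [zsmul_eq_mul]
      have h1 : ((((2 ^ k : ℕ) : ℤ) : A)) * Ideal.Quotient.mk I X
          = Ideal.Quotient.mk I ((2 : ℤ[X]) ^ k * X) := by
        push_cast
        rw [map_mul, map_pow, map_ofNat]
      rw [h1, Ideal.Quotient.eq_zero_iff_mem, hIJ]
      exact Ideal.subset_span (by simp)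
    set f2 : ZMod (2 ^ k) →+ A :=
      ZMod.lift (2 ^ k) ⟨(LinearMap.toSpanSingleton ℤ A (Ideal.Quotient.mk I X)).toAddMonoidHom, ht0⟩
      with hf2
    have hf2m : ∀ m : ℤ, f2 (m : ZMod (2 ^ k)) = Ideal.Quotient.mk I (C m * X) := by
      intro m
      rw [hf2, ZMod.lift_coe]
      show m • (Ideal.Quotient.mk I X) = _
      rw [zsmul_eq_mul, map_mul]
      simp [Ideal.Quotient.mk_algebraMap]
    set f1 : ℤ →+ A := (LinearMap.toSpanSingleton ℤ A 1).toAddMonoidHom with hf1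
    have hf1m : ∀ a : ℤ, f1 a = Ideal.Quotient.mk I (C a) := by
      intro a
      show a • (1 : A) = _
      rw [zsmul_eq_mul, mul_one]
      simp [Ideal.Quotient.mk_algebraMap]
    set φ : ℤ × ZMod (2 ^ k) →+ A := f1.coprod f2 with hφ
    have hφm : ∀ (a m : ℤ), φ (a, (m : ZMod (2 ^ k))) = Ideal.Quotient.mk I (C a + C m * X) := by
      intro a m
      rw [hφ]
      show f1 a + f2 (m : ZMod (2 ^ k)) = _
      rw [hf1m, hf2m, map_add]
    have hinj : Function.Injective φ := by
      rw [injective_iff_map_eq_zero]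
      rintro ⟨a, b⟩ h0
      obtain ⟨m, hm⟩ := ZMod.intCast_surjective (n := 2 ^ k) b
      rw [← hm] at h0 ⊢
      rw [hφm, Ideal.Quotient.eq_zero_iff_mem, hIJ, Ideal.mem_span_pair] at h0
      obtain ⟨u, v, huv⟩ := h0
      have ha : a = 0 := by
        have := congrArg (eval 0) huv
        simpa using this.symm
      subst ha
      simp only [map_zero, zero_add] at huv
      have hx : (u * 2 ^ k + v * (2 - X)) * X = (C m) * X := by
        linear_combination huv
      have hcan : u * 2 ^ k + v * (2 - X) = C m :=
        mul_right_cancel₀ X_ne_zero hx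
      have hev := congrArg (eval 2) hcan
      simp at hev
      have hm2 : m = 2 ^ k * eval 2 u := by linarith [hev]
      have hmz : ((m : ℤ) : ZMod (2 ^ k)) = 0 := by
        rw [hm2]; push_cast; rw [h2z, zero_mul]
      rw [hmz]
      rfl
    have hsurj : Function.Surjective φ := by
      intro x
      obtain ⟨p, rfl⟩ := Ideal.Quotient.mk_surjective x
      refine ⟨(p.coeff 0, ((eval 2 p.divX : ℤ) : ZMod (2 ^ k))), ?_⟩
      rw [hφm, Ideal.Quotient.eq, hIJ]
      have hd : (2 * X - X ^ 2 : ℤ[X]) ∣ (C (p.coeff 0) + C (eval 2 p.divX) * X) - p := by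
        obtain ⟨c, hc⟩ := X_sub_C_dvd_sub_C_eval (a := (2:ℤ)) (p := p.divX)
        rw [show (C (2:ℤ)) = 2 from by norm_num] at hc
        refine ⟨c, ?_⟩
        have hp : X * p.divX + C (p.coeff 0) = p := X_mul_divX_add p
        linear_combination (-(X:ℤ[X])) * hc + hp
      obtain ⟨c, hc⟩ := hd
      rw [hc]
      exact Ideal.mul_mem_right _ _ (Ideal.subset_span (by simp))
    set e := AddEquiv.ofBijective φ ⟨hinj, hsurj⟩ with he
    have hecoe : ∀ z, e z = φ z := fun z => rfl
    refine ⟨e.symm, ?_, ?_⟩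
    · rw [AddEquiv.symm_apply_eq, hecoe]
      have h := hφm 1 0
      simp only [Int.cast_zero] at h
      rw [h]
      simp
    · rw [AddEquiv.symm_apply_eq, hecoe]
      have h := hφm 0 1
      simp only [Int.cast_one] at h
      rw [h]
      simp
      rfl
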